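/- Let q be a prime power with q ≡ 1 (mod 4) and let f : F_q → F_q be a positivity preserver on M_3(F_q). Then f is injective on F_q^+, i.e., for all a, b ∈ F_q^+ with a ≠ b one has f(a) ≠ f(b). -/

import Mathlib

/-- An element of a field is *positive* if it is a nonzero square. -/
def IsPos {F : Type*} [Field F] (x : F) : Prop := ∃ y : F, y ≠ 0 ∧ y ^ 2 = x

/-- The `r`-th leading principal minor of a square matrix (the determinant of the
top-left `(r+1) × (r+1)` submatrix). -/
def leadingMinor {F : Type*} [CommRing F] {n : ℕ} (A : Matrix (Fin n) (Fin n) F)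
    (r : Fin n) : F :=
  (A.submatrix (Fin.castLE r.isLt) (Fin.castLE r.isLt)).det

/-- A matrix over a finite field is positive definite if it is symmetric and all its
leading principal minors are positive (nonzero squares). -/
def IsPosDef {F : Type*} [Field F] {n : ℕ} (A : Matrix (Fin n) (Fin n) F) : Prop :=
  A.IsSymm ∧ ∀ r : Fin n, IsPos (leadingMinor A r)

/-- The entrywise application `f[A]` of `f` to the matrix `A`. -/
def entrywiseMap {F : Type*} {n : ℕ} (f : F → F) (A : Matrix (Fin n) (Fin n) F) :
    Matrix (Fin n) (Fin n) F := Matrix.of fun i j => f (A i j)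

/-- `f` preserves positivity on `n × n` matrices. -/
def PreservesPos {F : Type*} [Field F] (n : ℕ) (f : F → F) : Prop :=
  ∀ A : Matrix (Fin n) (Fin n) F, IsPosDef A → IsPosDef (entrywiseMap f A)

section Aux

variable {F : Type*} [Field F]

lemma not_isPos_zero : ¬ IsPos (0 : F) := by
  rintro ⟨y, hy, h⟩
  exact hy (by simpa using pow_eq_zero_iff (n := 2) (by norm_num) |>.mp h)

lemma IsPos.ne_zero {x : F} (hx : IsPos x) : x ≠ 0 := by
  rintro rfl; exact not_isPos_zero hx

lemma IsPos.mul {x y : F} (hx : IsPos x) (hy : IsPos y) : IsPos (x * y) := by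
  obtain ⟨u, hu, rfl⟩ := hx
  obtain ⟨v, hv, rfl⟩ := hy
  exact ⟨u * v, mul_ne_zero hu hv, by ring⟩

lemma isPos_one : IsPos (1 : F) := ⟨1, one_ne_zero, one_pow 2⟩

lemma isPos_sq {u : F} (hu : u ≠ 0) : IsPos (u ^ 2) := ⟨u, hu, rfl⟩

lemma IsPos.isSquare {x : F} (hx : IsPos x) : IsSquare x := by
  obtain ⟨y, _, rfl⟩ := hx; exact ⟨y, (sq y)⟩

lemma isPos_of_isSquare_ne_zero {x : F} (hx : IsSquare x) (hx0 : x ≠ 0) : IsPos x := by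
  obtain ⟨y, rfl⟩ := hx
  exact ⟨y, fun h => hx0 (by simp [h]), (sq y)⟩

lemma IsPos.inv {x : F} (hx : IsPos x) : IsPos x⁻¹ := by
  obtain ⟨y, hy, rfl⟩ := hx
  exact ⟨y⁻¹, inv_ne_zero hy, by rw [inv_pow]⟩

lemma not_isSquare_ne_zero {x : F} (hx : ¬ IsSquare x) : x ≠ 0 := by
  rintro rfl; exact hx ⟨0, by simp⟩

end Aux

section Fin3

variable {F : Type*} [Field F]

lemma leadingMinor_zero' (A : Matrix (Fin 3) (Fin 3) F) : leadingMinor A 0 = A 0 0 := by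
  simp [leadingMinor, Matrix.det_fin_one]

lemma leadingMinor_one' (A : Matrix (Fin 3) (Fin 3) F) :
    leadingMinor A 1 = A 0 0 * A 1 1 - A 0 1 * A 1 0 := by
  simp [leadingMinor, Matrix.det_fin_two]

lemma leadingMinor_two' (A : Matrix (Fin 3) (Fin 3) F) : leadingMinor A 2 = A.det := by
  unfold leadingMinor
  have h : Fin.castLE ((2 : Fin 3)).isLt = id := by
    funext i; exact Fin.ext rfl
  rw [h, Matrix.submatrix_id_id]

/-- A convenient criterion for positive definiteness of an explicit symmetric 3×3 matrix. -/
lemma isPosDef_fin3 {p u v r w s : F} (h1 : IsPos p)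
    (h2 : IsPos (p * r - u * u))
    (h3 : IsPos (Matrix.det !![p, u, v; u, r, w; v, w, s])) :
    IsPosDef !![p, u, v; u, r, w; v, w, s] := by
  constructor
  · ext i j
    fin_cases i <;> fin_cases j <;> rfl
  · intro rr
    fin_cases rr
    · show IsPos (leadingMinor _ 0)
      rw [leadingMinor_zero']; simpa using h1
    · show IsPos (leadingMinor _ 1)
      rw [leadingMinor_one']; simpa using h2
    · show IsPos (leadingMinor _ 2)
      rw [leadingMinor_two']; exact h3

end Fin3

section Main

variable {F : Type*} [Field F] [Fintype F]

lemma card_odd_of_hq (hq : Fintype.card F % 4 = 1) : Fintype.card F % 2 = 1 := by omega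

lemma isPos_neg_one (hq : Fintype.card F % 4 = 1) : IsPos (-1 : F) := by
  classical
  have h : IsSquare (-1 : F) := FiniteField.isSquare_neg_one_iff.mpr (by omega)
  exact isPos_of_isSquare_ne_zero h (by
    intro h0
    have : (1 : F) = 0 := by linear_combination -h0
    exact one_ne_zero this)

lemma isPos_mul_of_not_isSquare {x y : F} (hx : ¬ IsSquare x) (hy : ¬ IsSquare y) :
    IsPos (x * y) := by
  classical
  have hx0 := not_isSquare_ne_zero hx
  have hy0 := not_isSquare_ne_zero hy
  have hcx : quadraticChar F x = -1 := quadraticChar_neg_one_iff_not_isSquare.mpr hx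
  have hcy : quadraticChar F y = -1 := quadraticChar_neg_one_iff_not_isSquare.mpr hy
  have hxy : quadraticChar F (x * y) = 1 := by rw [map_mul, hcx, hcy]; norm_num
  exact isPos_of_isSquare_ne_zero
    ((quadraticChar_one_iff_isSquare (mul_ne_zero hx0 hy0)).mp hxy)
    (mul_ne_zero hx0 hy0)

lemma sq_add_sq_field (hodd : Fintype.card F % 2 = 1) (x : F) :
    ∃ a b : F, a ^ 2 + b ^ 2 = x := by
  classical
  obtain ⟨a, b, hab⟩ := FiniteField.exists_root_sum_quadratic
    (f := Polynomial.X ^ 2) (g := Polynomial.X ^ 2 - Polynomial.C x)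
    (Polynomial.degree_X_pow 2) (Polynomial.degree_X_pow_sub_C (by norm_num) x) hodd
  refine ⟨a, b, ?_⟩
  simp only [Polynomial.eval_pow, Polynomial.eval_X, Polynomial.eval_sub,
    Polynomial.eval_C] at hab
  linear_combination hab

/-- Key lemma: if `d` is a nonsquare, there is a positive `s` with `s + d` a nonsquare. -/
lemma exists_pos_add_not_isSquare (hq : Fintype.card F % 4 = 1) {d : F}
    (hd : ¬ IsSquare d) : ∃ s : F, IsPos s ∧ ¬ IsSquare (s + d) := by
  by_contra hcon
  push_neg at hcon
  have hd0 : d ≠ 0 := not_isSquare_ne_zero hd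
  -- step: positivity is preserved by adding `d`
  have hstep : ∀ s : F, IsPos s → IsPos (s + d) := by
    intro s hs
    refine isPos_of_isSquare_ne_zero (hcon s hs) ?_
    intro h0
    apply hd
    have hd' : d = -1 * s := by linear_combination h0
    rw [hd']
    exact ((isPos_neg_one hq).mul hs).isSquare
  -- adding a square multiple of d preserves positivity
  have hsqstep : ∀ (u : F) (s : F), IsPos s → IsPos (s + u ^ 2 * d) := by
    intro u s hs
    rcases eq_or_ne u 0 with rfl | hu
    · simpa using hs
    · have h1 : IsPos (s * (u ^ 2)⁻¹ + d) :=
        hstep _ (hs.mul (isPos_sq hu).inv)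
      have h2 : IsPos (u ^ 2 * (s * (u ^ 2)⁻¹ + d)) := (isPos_sq hu).mul h1
      have h3 : u ^ 2 * (s * (u ^ 2)⁻¹ + d) = s + u ^ 2 * d := by
        field_simp
      rwa [h3] at h2
  -- hence adding any multiple of d preserves positivity
  have hall : ∀ (c : F) (s : F), IsPos s → IsPos (s + c * d) := by
    intro c s hs
    obtain ⟨x, y, hxy⟩ := sq_add_sq_field (card_odd_of_hq hq) c
    have h1 := hsqstep x s hs
    have h2 := hsqstep y _ h1
    have : s + x ^ 2 * d + y ^ 2 * d = s + c * d := by rw [← hxy]; ring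
    rwa [this] at h2
  -- contradiction: take s = 1, c = -d⁻¹
  have := hall (-d⁻¹) 1 isPos_one
  have h0 : (1 : F) + -d⁻¹ * d = 0 := by field_simp; norm_num
  rw [h0] at this
  exact not_isPos_zero this

end Main

theorem stmt16 {F : Type*} [Field F] [Fintype F] (hq : Fintype.card F % 4 = 1)
    (f : F → F) (hpres : PreservesPos 3 f) :
    ∀ a b : F, IsPos a → IsPos b → a ≠ b → f a ≠ f b := by
  intro a b ha hb hab hfab
  have hm1 : IsPos (-1 : F) := isPos_neg_one hq
  -- general contradiction machine: a pos def matrix whose rows 0,2 map to equal rows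
  have contra : ∀ A : Matrix (Fin 3) (Fin 3) F, IsPosDef A →
      (∀ j, f (A 0 j) = f (A 2 j)) → False := by
    intro A hA hrows
    obtain ⟨-, hmin⟩ := hpres A hA
    have h2 := hmin 2
    rw [leadingMinor_two'] at h2
    have hdet : (entrywiseMap f A).det = 0 := by
      apply Matrix.det_zero_of_row_eq (i := 0) (j := 2) (by decide)
      funext j
      exact hrows j
    rw [hdet] at h2
    exact not_isPos_zero h2
  by_cases hsq : IsSquare (a - b)
  -- Case 1: a - b is a (nonzero) square
  · have hab0 : a - b ≠ 0 := sub_ne_zero.mpr hab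
    have hpos : IsPos (b - a) := by
      have h1 : IsPos (a - b) := isPos_of_isSquare_ne_zero hsq hab0
      have : IsPos (-1 * (a - b)) := hm1.mul h1
      rwa [show (-1 : F) * (a - b) = b - a by ring] at this
    refine contra !![a, 0, a; 0, 1, 0; a, 0, b] (isPosDef_fin3 ha ?_ ?_) ?_
    · rwa [show a * 1 - (0 : F) * 0 = a by ring]
    · have hdet : Matrix.det !![a, 0, a; 0, 1, 0; a, 0, b] = a * (b - a) := by
        simp [Matrix.det_fin_three, Matrix.vecHead, Matrix.vecTail]; ring
      rw [hdet]
      exact ha.mul hpos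
    · intro j
      fin_cases j <;> simp [hfab, Matrix.vecHead, Matrix.vecTail]
  -- Case 2: a - b is a nonsquare
  · obtain ⟨s, hs, hsd⟩ := exists_pos_add_not_isSquare hq hsq
    have hba : ¬ IsSquare (b - a) := by
      intro h
      apply hsq
      have h1 : IsPos (b - a) :=
        isPos_of_isSquare_ne_zero h (sub_ne_zero.mpr (Ne.symm hab))
      have : IsPos (-1 * (b - a)) := hm1.mul h1
      rw [show (-1 : F) * (b - a) = a - b by ring] at this
      exact this.isSquare
    set r : F := a + s with hr
    refine contra !![a, a, a; a, r, b; a, b, b] (isPosDef_fin3 ha ?_ ?_) ?_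
    · have : a * r - a * a = a * s := by rw [hr]; ring
      rw [this]
      exact ha.mul hs
    · have hdet : Matrix.det !![a, a, a; a, r, b; a, b, b] = a * ((b - a) * (r - b)) := by
        simp [Matrix.det_fin_three, Matrix.vecHead, Matrix.vecTail]; ring
      rw [hdet]
      refine ha.mul (isPos_mul_of_not_isSquare hba ?_)
      rwa [show r - b = s + (a - b) by rw [hr]; ring]
    · intro j
      fin_cases j <;> simp [hfab, Matrix.vecHead, Matrix.vecTail]
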